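/- Define f(φ̃) = (1/(4π²))·∫₀^{2π} (φ̃(θ) − θ) dθ for increasing homeomorphisms φ̃ of ℝ satisfying φ̃(θ+2π) = φ̃(θ)+2π. Then for all such φ̃, ψ̃ one has |f(φ̃ ∘ ψ̃) − f(φ̃) − f(ψ̃)| < 2; i.e., f is a quasi-morphism on the group of lifts of orientation-preserving circle homeomorphisms. -/
import Mathlib


open Real

/-- The quasi-morphism `f(φ) = (1/(4π²)) ∫₀^{2π} (φ(θ) - θ) dθ` on lifts of
orientation-preserving circle homeomorphisms. -/
noncomputable def liftAvg (φ : ℝ → ℝ) : ℝ :=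
  (1 / (4 * π ^ 2)) * ∫ θ in (0:ℝ)..(2 * π), (φ θ - θ)

/-- `f(φ) = (1/(4π²)) ∫₀^{2π} (φ(θ) - θ) dθ` is a quasi-morphism on
the group of lifts of orientation-preserving circle homeomorphisms: for all such
lifts `φ, ψ`, `|f(φ ∘ ψ) - f(φ) - f(ψ)| < 2`. -/
theorem liftAvg_quasimorphism
    (φ ψ : ℝ → ℝ)
    (hφmono : StrictMono φ) (hφcont : Continuous φ) (hφsurj : Function.Surjective φ)
    (hφper : ∀ θ : ℝ, φ (θ + 2 * π) = φ θ + 2 * π)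
    (hψmono : StrictMono ψ) (hψcont : Continuous ψ) (hψsurj : Function.Surjective ψ)
    (hψper : ∀ θ : ℝ, ψ (θ + 2 * π) = ψ θ + 2 * π) :
    |liftAvg (φ ∘ ψ) - liftAvg φ - liftAvg ψ| < 2 := by
  have hπ : (0:ℝ) < π := Real.pi_pos
  have h2π : (0:ℝ) < 2 * π := by linarith
  set g : ℝ → ℝ := fun θ => φ θ - θ with hg
  -- g is periodic
  have hper : Function.Periodic g (2 * π) := by
    intro θ
    simp only [hg]
    rw [hφper θ]
    ring
  have gper : ∀ (n : ℤ) (θ : ℝ), g (θ + 2 * π * n) = g θ := by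
    intro n θ
    have := (hper.int_mul n) θ
    rw [show (2:ℝ) * π * n = (n:ℝ) * (2 * π) by ring]
    exact this
  -- key oscillation bound
  have key : ∀ a b : ℝ, g a - g b < 2 * π := by
    intro a b
    set n : ℤ := ⌊(a - b) / (2 * π)⌋ with hn
    set b' : ℝ := b + 2 * π * n with hb'
    have hfl : (n:ℝ) ≤ (a - b) / (2 * π) := Int.floor_le _
    have hfl2 : (a - b) / (2 * π) < n + 1 := Int.lt_floor_add_one _
    have hle : b' ≤ a := by
      have h1 : (n:ℝ) * (2 * π) ≤ a - b := (le_div_iff₀ h2π).mp hfl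
      have : (n:ℝ) * (2 * π) = 2 * π * n := by ring
      linarith [this ▸ h1]
    have hlt : a < b' + 2 * π := by
      have h1 : a - b < ((n:ℝ) + 1) * (2 * π) := (div_lt_iff₀ h2π).mp hfl2
      have h2 : ((n:ℝ) + 1) * (2 * π) = 2 * π * n + 2 * π := by ring
      rw [h2] at h1
      simp only [hb']
      linarith
    have hgb : g b' = g b := gper n b
    have hφa : φ a < φ b' + 2 * π := by
      have := hφmono hlt
      rwa [hφper b'] at this
    rw [← hgb]
    simp only [hg]
    linarith
  -- pointwise bound on the difference
  have hpt : ∀ θ : ℝ, |g (ψ θ) - g θ| ≤ 2 * π := by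
    intro θ
    have h1 := key (ψ θ) θ
    have h2 := key θ (ψ θ)
    rw [abs_le]
    constructor <;> linarith
  -- integrability
  have i1 : IntervalIntegrable (fun θ => (φ ∘ ψ) θ - θ) MeasureTheory.volume 0 (2 * π) :=
    ((hφcont.comp hψcont).sub continuous_id).intervalIntegrable _ _
  have i2 : IntervalIntegrable (fun θ : ℝ => φ θ - θ) MeasureTheory.volume 0 (2 * π) :=
    (hφcont.sub continuous_id).intervalIntegrable _ _
  have i3 : IntervalIntegrable (fun θ : ℝ => ψ θ - θ) MeasureTheory.volume 0 (2 * π) :=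
    (hψcont.sub continuous_id).intervalIntegrable _ _
  -- the defect is (1/(4π²)) ∫ (g∘ψ - g)
  have hI : liftAvg (φ ∘ ψ) - liftAvg φ - liftAvg ψ
      = (1 / (4 * π ^ 2)) * ∫ θ in (0:ℝ)..(2 * π), (g (ψ θ) - g θ) := by
    unfold liftAvg
    rw [← mul_sub, ← mul_sub]
    congr 1
    rw [← intervalIntegral.integral_sub i1 i2,
        ← intervalIntegral.integral_sub (i1.sub i2) i3]
    apply intervalIntegral.integral_congr
    intro θ _
    simp only [hg, Function.comp_apply]
    ring
  -- bound on the integral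
  have hbound : |∫ θ in (0:ℝ)..(2 * π), (g (ψ θ) - g θ)| ≤ 2 * π * (2 * π) := by
    have h := intervalIntegral.norm_integral_le_of_norm_le_const
      (C := 2 * π) (f := fun θ => g (ψ θ) - g θ) (a := (0:ℝ)) (b := 2 * π)
      (fun x _ => by simpa using hpt x)
    simpa [abs_of_pos h2π] using h
  rw [hI, abs_mul]
  have hc : |1 / (4 * π ^ 2)| = 1 / (4 * π ^ 2) := abs_of_pos (by positivity)
  rw [hc]
  have h4 : (0:ℝ) < 4 * π ^ 2 := by positivity
  have hle1 : (1 / (4 * π ^ 2)) * |∫ θ in (0:ℝ)..(2 * π), (g (ψ θ) - g θ)|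
      ≤ (1 / (4 * π ^ 2)) * (2 * π * (2 * π)) := by
    apply mul_le_mul_of_nonneg_left hbound
    positivity
  have heq : (1 / (4 * π ^ 2)) * (2 * π * (2 * π)) = 1 := by
    field_simp
    ring
  linarith
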